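/- Let ∑ aₙ be a weak-permutably convergent series of real numbers. Then for every permutation σ of the positive integers, it is impossible that ∑ |a_{σ(n)}| diverges to infinity; hence (classically) ∑ |aₙ| converges. -/

import Mathlib

def SeriesConvTo (a : ℕ → ℝ) (s : ℝ) : Prop :=
  Filter.Tendsto (fun n => ∑ i ∈ Finset.range n, a i) Filter.atTop (nhds s)

def BracketConvTo (c : ℕ → ℝ) (f : ℕ → ℕ) (t : ℝ) : Prop :=
  StrictMono f ∧ f 0 = 0 ∧
    Filter.Tendsto (fun K => ∑ i ∈ Finset.range (f K), c i) Filter.atTop (nhds t)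

/-- A series is weak-permutably convergent if it converges and every rearrangement
admits a convergent bracketing. -/
def WeakPermConv (a : ℕ → ℝ) : Prop :=
  (∃ s, SeriesConvTo a s) ∧
    ∀ σ : Equiv.Perm ℕ, ∃ f : ℕ → ℕ, ∃ t : ℝ, BracketConvTo (fun n => a (σ n)) f t

open Filter Finset

private lemma nonneg_summable_of_tendsto {g : ℕ → ℝ} (hg : ∀ n, 0 ≤ g n) {l : ℝ}
    (h : Filter.Tendsto (fun n => ∑ i ∈ Finset.range n, g i) Filter.atTop (nhds l)) :
    Summable g := by
  by_contra hns
  exact not_tendsto_atTop_of_tendsto_nhds h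
    ((not_summable_iff_tendsto_nat_atTop_of_nonneg hg).1 hns)

private lemma key_summable (a : ℕ → ℝ) (h : WeakPermConv a) : Summable (fun n => |a n|) := by
  classical
  by_contra hns
  obtain ⟨⟨s, hs⟩, hperm⟩ := h
  set pos : ℕ → ℝ := fun n => max (a n) 0 with hposdef
  set neg : ℕ → ℝ := fun n => max (-a n) 0 with hnegdef
  have hposn : ∀ n, 0 ≤ pos n := fun n => le_max_right _ _
  have hnegn : ∀ n, 0 ≤ neg n := fun n => le_max_right _ _
  have habs : ∀ n, |a n| = pos n + neg n := by
    intro n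
    rcases le_total 0 (a n) with h1 | h1
    · simp [hposdef, hnegdef, abs_of_nonneg h1, max_eq_left h1,
        max_eq_right (neg_nonpos.2 h1)]
    · simp [hposdef, hnegdef, abs_of_nonpos h1, max_eq_right h1,
        max_eq_left (neg_nonneg.2 h1)]
  have hneg_eq : ∀ n, neg n = pos n - a n := by
    intro n
    rcases le_total 0 (a n) with h1 | h1
    · simp [hposdef, hnegdef, max_eq_left h1, max_eq_right (neg_nonpos.2 h1)]
    · simp [hposdef, hnegdef, max_eq_right h1, max_eq_left (neg_nonneg.2 h1)]
  -- if pos is summable then neg is summable and conversely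
  have himp1 : Summable pos → Summable neg := by
    intro hp
    have h1 : Filter.Tendsto (fun n => ∑ i ∈ Finset.range n, neg i) Filter.atTop
        (nhds (∑' n, pos n - s)) := by
      have := (hp.hasSum.tendsto_sum_nat).sub hs
      refine this.congr (fun n => ?_)
      simp [hneg_eq, Finset.sum_sub_distrib]
    exact nonneg_summable_of_tendsto hnegn h1
  have himp2 : Summable neg → Summable pos := by
    intro hq
    have h1 : Filter.Tendsto (fun n => ∑ i ∈ Finset.range n, pos i) Filter.atTop
        (nhds (∑' n, neg n + s)) := by
      have := (hq.hasSum.tendsto_sum_nat).add hs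
      refine this.congr (fun n => ?_)
      rw [← Finset.sum_add_distrib]
      congr 1; funext i; rw [hneg_eq]; ring
    exact nonneg_summable_of_tendsto hposn h1
  have hPos : ¬ Summable pos := by
    intro hp
    exact hns (by simpa [habs] using hp.add (himp1 hp))
  have hNeg : ¬ Summable neg := fun hq => hPos (himp2 hq)
  -- the sets of nonnegative and negative indices are infinite
  set Pp : ℕ → Prop := fun n => 0 ≤ a n with hPpdef
  set Np : ℕ → Prop := fun n => ¬ (0 ≤ a n) with hNpdef
  have hPinf : (setOf Pp).Infinite := by
    intro hfin
    apply hPos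
    apply summable_of_ne_finset_zero (s := hfin.toFinset)
    intro x hx
    simp only [Set.Finite.mem_toFinset, Set.mem_setOf_eq] at hx
    simp [hposdef, max_eq_right (le_of_not_ge (show ¬ 0 ≤ a x from hx))]
  have hNinf : (setOf Np).Infinite := by
    intro hfin
    apply hNeg
    apply summable_of_ne_finset_zero (s := hfin.toFinset)
    intro x hx
    simp only [Set.Finite.mem_toFinset, Set.mem_setOf_eq] at hx
    have : 0 ≤ a x := by by_contra hc; exact hx hc
    simp [hnegdef, max_eq_right (neg_nonpos.2 this)]
  set pn : ℕ → ℕ := Nat.nth Pp with hpndef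
  set qn : ℕ → ℕ := Nat.nth Np with hqndef
  have hpa : ∀ j, 0 ≤ a (pn j) := fun j => Nat.nth_mem_of_infinite hPinf j
  have hqa : ∀ j, a (qn j) < 0 := fun j => not_le.1 (Nat.nth_mem_of_infinite hNinf j)
  -- the series of positive parts diverges
  have hFns : ¬ Summable (fun j => a (pn j)) := by
    intro hsum
    apply hPos
    have heq : (fun j => a (pn j)) = pos ∘ pn := by
      funext j; simp [hposdef, max_eq_left (hpa j)]
    rw [heq] at hsum
    refine (Function.Injective.summable_iff (Nat.nth_injective hPinf) ?_).1 hsum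
    intro x hx
    rw [Nat.range_nth_of_infinite hPinf] at hx
    simp only [Set.mem_setOf_eq, hPpdef] at hx
    simp [hposdef, max_eq_right (le_of_not_ge hx)]
  set F : ℕ → ℝ := fun r => ∑ j ∈ Finset.range r, a (pn j) with hFdef
  have hF : Filter.Tendsto F Filter.atTop Filter.atTop :=
    (not_summable_iff_tendsto_nat_atTop_of_nonneg (fun j => hpa j)).1 hFns
  set c : ℕ → ℝ := fun k => ∑ j ∈ Finset.range k, |a (qn j)| with hcdef
  -- choose thresholds
  have hgex : ∀ k : ℕ, ∃ N, ∀ n ≥ N, ((k : ℝ) + 1) + c (k + 1) ≤ F n := by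
    intro k
    exact eventually_atTop.1 (hF.eventually_ge_atTop _)
  choose g hg using hgex
  set r : ℕ → ℕ := fun k => k + (Finset.range (k + 1)).sup g with hrdef
  have hrs : StrictMono r := by
    apply strictMono_nat_of_lt_succ
    intro k
    have : (Finset.range (k + 1)).sup g ≤ (Finset.range (k + 1 + 1)).sup g :=
      Finset.sup_mono (Finset.range_subset_range.2 (by omega))
    simp only [hrdef]
    omega
  have hr : ∀ k : ℕ, ((k : ℝ) + 1) + c (k + 1) ≤ F (r k) := by
    intro k
    have hle : g k ≤ r k :=
      le_trans (Finset.le_sup (Finset.self_mem_range_succ k)) (Nat.le_add_left _ _)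
    exact hg k (r k) hle
  set m : ℕ → ℕ := fun k => r k + k with hmdef
  have hms : StrictMono m := by
    intro i j hij
    have := hrs hij
    show r i + i < r j + j
    omega
  have hmgap : ∀ k, m k + 1 < m (k + 1) := by
    intro k
    have := hrs (show k < k + 1 by omega)
    show r k + k + 1 < r (k + 1) + (k + 1)
    omega
  set Mp : ℕ → Prop := fun n => ∃ k, m k = n with hMpdef
  have hMinf : (setOf Mp).Infinite := Set.infinite_range_of_injective hms.injective
  have hnotm : ∀ k, ¬ Mp (m k + 1) := by
    rintro k ⟨j, hj⟩
    rcases le_or_gt j k with hjk | hjk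
    · have := hms.monotone hjk; omega
    · have h1 : m (k + 1) ≤ m j := hms.monotone hjk
      have h2 := hmgap k
      omega
  have hMcinf : (setOf fun n => ¬ Mp n).Infinite :=
    Set.infinite_of_injective_forall_mem
      (f := fun k => m k + 1)
      (fun i j hij => by
        simp only at hij
        exact hms.injective (by omega))
      (fun k => hnotm k)
  -- counting lemmas
  have hQm : ∀ k, Nat.count Mp (m k) = k := by
    intro k
    rw [Nat.count_eq_card_filter_range]
    have heq : ({x ∈ Finset.range (m k) | Mp x} : Finset ℕ) = (Finset.range k).image m := by
      ext i
      simp only [Finset.mem_filter, Finset.mem_range, Finset.mem_image, hMpdef]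
      constructor
      · rintro ⟨hik, j, hj⟩
        exact ⟨j, hms.lt_iff_lt.1 (by omega), hj⟩
      · rintro ⟨j, hjk, hj⟩
        exact ⟨by rw [← hj]; exact hms hjk, j, hj⟩
    rw [heq, Finset.card_image_of_injective _ hms.injective, Finset.card_range]
  have hcompl : ∀ n, Nat.count Mp n + Nat.count (fun x => ¬ Mp x) n = n := by
    intro n
    induction n with
    | zero => simp
    | succ n ih =>
      rw [Nat.count_succ, Nat.count_succ]
      by_cases hn : Mp n <;> simp [hn] <;> omega
  -- the permutation
  set σf : ℕ → ℕ := fun n =>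
    if Mp n then qn (Nat.count Mp n) else pn (n - Nat.count Mp n) with hσfdef
  have hinj : Function.Injective σf := by
    intro n1 n2 heq
    by_cases h1 : Mp n1 <;> by_cases h2 : Mp n2 <;>
      simp only [hσfdef, h1, h2, if_pos, if_neg, if_true, if_false] at heq
    · exact Nat.count_injective h1 h2 (Nat.nth_injective hNinf heq)
    · exact absurd (heq ▸ hqa (Nat.count Mp n1)) (not_lt.2 (hpa _))
    · exact absurd (heq.symm ▸ hqa (Nat.count Mp n2)) (not_lt.2 (hpa _))
    · have h3 := Nat.nth_injective hPinf heq
      have h4 := hcompl n1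
      have h5 := hcompl n2
      have h6 : Nat.count (fun x => ¬ Mp x) n1 = Nat.count (fun x => ¬ Mp x) n2 := by omega
      exact Nat.count_injective h1 h2 h6
  have hsurj : Function.Surjective σf := by
    intro y
    by_cases hy : 0 ≤ a y
    · refine ⟨Nat.nth (fun x => ¬ Mp x) (Nat.count Pp y), ?_⟩
      have hmem : ¬ Mp (Nat.nth (fun x => ¬ Mp x) (Nat.count Pp y)) :=
        Nat.nth_mem_of_infinite hMcinf _
      have hcnt : Nat.count (fun x => ¬ Mp x) (Nat.nth (fun x => ¬ Mp x) (Nat.count Pp y))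
          = Nat.count Pp y := Nat.count_nth_of_infinite hMcinf _
      have hc2 := hcompl (Nat.nth (fun x => ¬ Mp x) (Nat.count Pp y))
      simp only [hσfdef, if_neg hmem]
      have : Nat.nth (fun x => ¬ Mp x) (Nat.count Pp y) -
          Nat.count Mp (Nat.nth (fun x => ¬ Mp x) (Nat.count Pp y)) = Nat.count Pp y := by omega
      rw [this, hpndef, Nat.nth_count (by simpa [hPpdef] using hy)]
    · refine ⟨m (Nat.count Np y), ?_⟩
      have hmem : Mp (m (Nat.count Np y)) := ⟨_, rfl⟩
      simp only [hσfdef, if_pos hmem, hQm]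
      rw [hqndef, Nat.nth_count (by simpa [hNpdef] using hy)]
  set σ : Equiv.Perm ℕ := Equiv.ofBijective σf ⟨hinj, hsurj⟩ with hσdef
  -- partial sums of the rearranged series
  have hS : ∀ n, ∑ i ∈ Finset.range n, a (σf i) =
      (∑ j ∈ Finset.range (Nat.count Mp n), a (qn j)) +
      (∑ j ∈ Finset.range (n - Nat.count Mp n), a (pn j)) := by
    intro n
    induction n with
    | zero => simp
    | succ n ih =>
      rw [Finset.sum_range_succ, ih]
      by_cases hn : Mp n
      · rw [Nat.count_succ, if_pos hn]
        have h1 : n + 1 - (Nat.count Mp n + 1) = n - Nat.count Mp n := by omega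
        rw [h1, Finset.sum_range_succ]
        simp only [hσfdef, if_pos hn]
        ring
      · rw [Nat.count_succ, if_neg hn, add_zero]
        have hle : Nat.count Mp n ≤ n := Nat.count_le _
        have h1 : n + 1 - Nat.count Mp n = (n - Nat.count Mp n) + 1 := by omega
        rw [h1, Finset.sum_range_succ]
        simp only [hσfdef, if_neg hn]
        ring
  -- lower bound for the partial sums
  have hlow : ∀ n, (Nat.count Mp n : ℝ) - 1 ≤ ∑ i ∈ Finset.range n, a (σf i) := by
    intro n
    rw [hS n]
    set k := Nat.count Mp n with hk
    rcases Nat.eq_zero_or_pos k with hk0 | hk0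
    · rw [hk0]
      have : (0:ℝ) ≤ ∑ j ∈ Finset.range (n - k), a (pn j) :=
        Finset.sum_nonneg (fun j _ => hpa j)
      simp only [hk0] at this ⊢
      push_cast
      have : (0:ℝ) ≤ ∑ j ∈ Finset.range 0, a (qn j) + ∑ j ∈ Finset.range (n - 0), a (pn j) := by
        simpa using this
      linarith
    · -- k ≥ 1
      have hmk : m (k - 1) < n := by
        by_contra hc
        push_neg at hc
        have := Nat.count_monotone (p := Mp) hc
        rw [hQm] at this
        omega
      have hnk : r (k - 1) ≤ n - k := by
        have : m (k - 1) = r (k - 1) + (k - 1) := rfl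
        omega
      have hq : ∑ j ∈ Finset.range k, a (qn j) = -(c k) := by
        rw [hcdef, ← Finset.sum_neg_distrib]
        apply Finset.sum_congr rfl
        intro j _
        rw [abs_of_neg (hqa j)]; ring
      have hp : F (r (k - 1)) ≤ ∑ j ∈ Finset.range (n - k), a (pn j) := by
        apply Finset.sum_le_sum_of_subset_of_nonneg (Finset.range_subset_range.2 hnk)
        intro j _ _
        exact hpa j
      have hr' := hr (k - 1)
      have hk1 : k - 1 + 1 = k := by omega
      rw [hk1] at hr'
      have hcast : ((k - 1 : ℕ) : ℝ) = (k : ℝ) - 1 := by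
        push_cast [Nat.cast_sub hk0]; ring
      rw [hcast] at hr'
      rw [hq]
      have := le_trans hr' hp
      linarith
  -- count tends to infinity
  have hQtend : Filter.Tendsto (fun n => Nat.count Mp n) Filter.atTop Filter.atTop := by
    apply tendsto_atTop_atTop.2
    intro b
    refine ⟨m b, fun n hn => ?_⟩
    calc b = Nat.count Mp (m b) := (hQm b).symm
      _ ≤ Nat.count Mp n := Nat.count_monotone _ hn
  have hStend : Filter.Tendsto (fun n => ∑ i ∈ Finset.range n, a (σf i))
      Filter.atTop Filter.atTop := by
    apply tendsto_atTop_mono hlow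
    have h1 : Filter.Tendsto (fun n => (Nat.count Mp n : ℝ)) Filter.atTop Filter.atTop :=
      tendsto_natCast_atTop_atTop.comp hQtend
    simpa [sub_eq_add_neg] using tendsto_atTop_add_const_right Filter.atTop (-1 : ℝ) h1
  -- contradiction with the existence of a convergent bracketing
  obtain ⟨f, t, hfs, hf0, hconv⟩ := hperm σ
  have hcoe : ∀ i, σ i = σf i := fun i => rfl
  have hsub : Filter.Tendsto (fun K => ∑ i ∈ Finset.range (f K), a (σ i))
      Filter.atTop Filter.atTop := by
    have := hStend.comp hfs.tendsto_atTop
    simpa [Function.comp_def, hcoe] using this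
  exact not_tendsto_atTop_of_tendsto_nhds hconv hsub

/-- Lemma 2.5: for a weak-permutably convergent series, no rearranged series of absolute
values diverges to infinity; hence (classically) `∑ |a n|` converges. -/
theorem lemma25 (a : ℕ → ℝ) (h : WeakPermConv a) :
    (∀ σ : Equiv.Perm ℕ,
      ¬Filter.Tendsto (fun n => ∑ i ∈ Finset.range n, |a (σ i)|) Filter.atTop Filter.atTop) ∧
    ∃ l, SeriesConvTo (fun n => |a n|) l := by
  have hkey := key_summable a h
  constructor
  · intro σ hdiv
    have hsum : Summable (fun n => |a (σ n)|) := hkey.comp_injective σ.injective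
    exact not_tendsto_atTop_of_tendsto_nhds hsum.hasSum.tendsto_sum_nat hdiv
  · exact ⟨∑' n, |a n|, hkey.hasSum.tendsto_sum_nat⟩
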